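/- Let A be a real D×D matrix with det A > 0 and SVD A = USVᵀ. Then the rotation matrix R = UVᵀ achieves the maximum of tr(AᵀR) over all R ∈ SO(D), and this maximum equals the sum of the singular values of A. -/
import Mathlib


open Matrix

lemma orth_diag_le_one {D : ℕ} (M : Matrix (Fin D) (Fin D) ℝ)
    (hM : Mᵀ * M = 1) (i : Fin D) : M i i ≤ 1 := by
  have h1 : ∑ j, M j i * M j i = 1 := by
    have := congrFun (congrFun hM i) i
    simpa [Matrix.mul_apply, Matrix.one_apply] using this
  have h2 : M i i * M i i ≤ 1 := by
    rw [← h1]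
    exact Finset.single_le_sum (fun j _ => mul_self_nonneg (M j i)) (Finset.mem_univ i)
  nlinarith [h2]

theorem optimal_rotation_pos_det (D : ℕ) (A U V : Matrix (Fin D) (Fin D) ℝ)
    (s : Fin D → ℝ)
    (hdetA : 0 < A.det)
    (hU : Uᵀ * U = 1) (hV : Vᵀ * V = 1)
    (hs : Antitone s) (hnn : ∀ i, 0 ≤ s i)
    (hA : A = U * Matrix.diagonal s * Vᵀ) :
    (U * Vᵀ)ᵀ * (U * Vᵀ) = 1 ∧ (U * Vᵀ).det = 1 ∧
      (Aᵀ * (U * Vᵀ)).trace = ∑ i, s i ∧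
      ∀ R : Matrix (Fin D) (Fin D) ℝ, Rᵀ * R = 1 → R.det = 1 →
        (Aᵀ * R).trace ≤ ∑ i, s i := by
  have hUU : U * Uᵀ = 1 := (mul_eq_one_comm).mp hU
  have hVV : V * Vᵀ = 1 := (mul_eq_one_comm).mp hV
  have hdetU : U.det * U.det = 1 := by
    have := congrArg Matrix.det hU
    simpa [Matrix.det_transpose, mul_comm] using this
  have hdetV : V.det * V.det = 1 := by
    have := congrArg Matrix.det hV
    simpa [Matrix.det_transpose, mul_comm] using this
  have horth : (U * Vᵀ)ᵀ * (U * Vᵀ) = 1 := by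
    calc (U * Vᵀ)ᵀ * (U * Vᵀ) = V * (Uᵀ * U) * Vᵀ := by
          simp [Matrix.transpose_mul, Matrix.mul_assoc]
      _ = 1 := by simp [hU, hVV]
  -- determinant of U * Vᵀ is 1
  have hdetA' : A.det = U.det * V.det * ∏ i, s i := by
    rw [hA]
    simp [Matrix.det_mul, Matrix.det_transpose, Matrix.det_diagonal]
    ring
  have hprod : 0 ≤ ∏ i, s i := Finset.prod_nonneg fun i _ => hnn i
  have hUV : 0 < U.det * V.det := by
    rcases lt_or_ge 0 (U.det * V.det) with h | h
    · exact h
    · exfalso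
      have : A.det ≤ 0 := by
        rw [hdetA']
        exact mul_nonpos_of_nonpos_of_nonneg h hprod
      linarith
  have hdet1 : (U * Vᵀ).det = 1 := by
    have hsq : (U.det * V.det) * (U.det * V.det) = 1 := by
      nlinarith [hdetU, hdetV]
    have : U.det * V.det = 1 := by nlinarith [hUV, hsq]
    simp [Matrix.det_mul, Matrix.det_transpose, this]
  -- trace at optimum
  have hAT : Aᵀ = V * Matrix.diagonal s * Uᵀ := by
    rw [hA]
    simp [Matrix.transpose_mul, Matrix.diagonal_transpose, Matrix.mul_assoc]
  have htr : (Aᵀ * (U * Vᵀ)).trace = ∑ i, s i := by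
    rw [hAT]
    have : V * Matrix.diagonal s * Uᵀ * (U * Vᵀ)
        = V * Matrix.diagonal s * Vᵀ := by
      rw [Matrix.mul_assoc (V * Matrix.diagonal s), ← Matrix.mul_assoc Uᵀ, hU, Matrix.one_mul]
    rw [this, Matrix.mul_assoc, Matrix.trace_mul_comm, Matrix.mul_assoc, hV,
      Matrix.mul_one, Matrix.trace_diagonal]
  refine ⟨horth, hdet1, htr, ?_⟩
  intro R hR _
  set M : Matrix (Fin D) (Fin D) ℝ := Uᵀ * R * V with hMdef
  have hMorth : Mᵀ * M = 1 := by
    rw [hMdef]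
    calc (Uᵀ * R * V)ᵀ * (Uᵀ * R * V)
        = Vᵀ * (Rᵀ * ((U * Uᵀ) * (R * V))) := by
          simp [Matrix.transpose_mul, Matrix.mul_assoc]
      _ = 1 := by
          rw [hUU, Matrix.one_mul, ← Matrix.mul_assoc Rᵀ, hR, Matrix.one_mul, hV]
  have htrR : (Aᵀ * R).trace = ∑ i, s i * M i i := by
    rw [hAT]
    have : (V * Matrix.diagonal s * Uᵀ * R).trace
        = (Matrix.diagonal s * M).trace := by
      rw [hMdef, Matrix.trace_mul_comm (V * Matrix.diagonal s * Uᵀ) R]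
      simp only [Matrix.mul_assoc]
      rw [Matrix.trace_mul_comm R, Matrix.mul_assoc V, Matrix.trace_mul_comm V]
      simp [Matrix.mul_assoc]
    rw [this]
    simp [Matrix.trace, Matrix.diag, Matrix.diagonal_mul]
  rw [htrR]
  apply Finset.sum_le_sum
  intro i _
  have := orth_diag_le_one M hMorth i
  nlinarith [hnn i]
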